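/- The rational function I = v₂w₂(1+(1+v₂)w₂+(1+v₂+v₃)w₃)/((v₂+v₃+v₃w₂)w₃) is annihilated by the first-order differential operator −w₃(1+2w₂+w₃)∂/∂w₃ − w₂(1+w₂)∂/∂w₂ + v₃(1+w₂)∂/∂v₃ + v₂∂/∂v₂. -/

import Mathlib

/-- The first integral `I = v₂w₂(1+(1+v₂)w₂+(1+v₂+v₃)w₃)/((v₂+v₃+v₃w₂)w₃)`. -/
noncomputable def Ifun (v2 v3 w2 w3 : ℝ) : ℝ :=
  v2 * w2 * (1 + (1 + v2) * w2 + (1 + v2 + v3) * w3) / ((v2 + v3 + v3 * w2) * w3)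

lemma quad_div_deriv (a b c d e x : ℝ) (hx : d + e * x ≠ 0) :
    deriv (fun t => (a + b * t + c * (t * t)) / (d + e * t)) x
      = ((b + c * (1 * x + x * 1)) * (d + e * x)
          - (a + b * x + c * (x * x)) * e) / (d + e * x) ^ 2 := by
  have h1 : HasDerivAt (fun t : ℝ => t) 1 x := hasDerivAt_id x
  have hnum : HasDerivAt (fun t => a + b * t + c * (t * t))
      (b + c * (1 * x + x * 1)) x := by
    have := ((h1.const_mul b).add ((h1.mul h1).const_mul c)).const_add a
    simpa [mul_comm, ← add_assoc] using this
  have hden : HasDerivAt (fun t => d + e * t) e x := by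
    simpa using ((h1.const_mul e).const_add d)
  simpa [Pi.div_def] using (hnum.div hden hx).deriv

/-- `I` is annihilated by
`−w₃(1+2w₂+w₃)∂/∂w₃ − w₂(1+w₂)∂/∂w₂ + v₃(1+w₂)∂/∂v₃ + v₂∂/∂v₂`. -/
theorem stmt_8 (v2 v3 w2 w3 : ℝ)
    (hd : v2 + v3 + v3 * w2 ≠ 0) (hw3 : w3 ≠ 0) :
    -(w3 * (1 + 2 * w2 + w3)) * deriv (fun t => Ifun v2 v3 w2 t) w3
      - w2 * (1 + w2) * deriv (fun t => Ifun v2 v3 t w3) w2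
      + v3 * (1 + w2) * deriv (fun t => Ifun v2 t w2 w3) v3
      + v2 * deriv (fun t => Ifun t v3 w2 w3) v2 = 0 := by
  have hdw : (v2 + v3 + v3 * w2) * w3 ≠ 0 := mul_ne_zero hd hw3
  -- ∂/∂w3
  have e1 : (fun t => Ifun v2 v3 w2 t)
      = fun t => (v2 * w2 * (1 + (1 + v2) * w2) + (v2 * w2 * (1 + v2 + v3)) * t
          + 0 * (t * t)) / (0 + (v2 + v3 + v3 * w2) * t) := by
    funext t; simp only [Ifun]; ring_nf
  have h1 : 0 + (v2 + v3 + v3 * w2) * w3 ≠ 0 := by simpa using hdw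
  -- ∂/∂w2
  have e2 : (fun t => Ifun v2 v3 t w3)
      = fun t => (0 + (v2 * (1 + (1 + v2 + v3) * w3)) * t + (v2 * (1 + v2)) * (t * t))
          / ((v2 + v3) * w3 + (v3 * w3) * t) := by
    funext t; simp only [Ifun]; ring_nf
  have h2 : (v2 + v3) * w3 + (v3 * w3) * w2 ≠ 0 := by
    have : (v2 + v3) * w3 + (v3 * w3) * w2 = (v2 + v3 + v3 * w2) * w3 := by ring
    rw [this]; exact hdw
  -- ∂/∂v3
  have e3 : (fun t => Ifun v2 t w2 w3)
      = fun t => (v2 * w2 * (1 + (1 + v2) * w2 + (1 + v2) * w3) + (v2 * w2 * w3) * t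
          + 0 * (t * t)) / (v2 * w3 + ((1 + w2) * w3) * t) := by
    funext t; simp only [Ifun]; ring_nf
  have h3 : v2 * w3 + ((1 + w2) * w3) * v3 ≠ 0 := by
    have : v2 * w3 + ((1 + w2) * w3) * v3 = (v2 + v3 + v3 * w2) * w3 := by ring
    rw [this]; exact hdw
  -- ∂/∂v2
  have e4 : (fun t => Ifun t v3 w2 w3)
      = fun t => (0 + (w2 * (1 + w2 + w3 + v3 * w3)) * t + (w2 * (w2 + w3)) * (t * t))
          / ((v3 + v3 * w2) * w3 + w3 * t) := by
    funext t; simp only [Ifun]; ring_nf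
  have h4 : (v3 + v3 * w2) * w3 + w3 * v2 ≠ 0 := by
    have : (v3 + v3 * w2) * w3 + w3 * v2 = (v2 + v3 + v3 * w2) * w3 := by ring
    rw [this]; exact hdw
  rw [e1, e2, e3, e4, quad_div_deriv _ _ _ _ _ _ h1, quad_div_deriv _ _ _ _ _ _ h2,
    quad_div_deriv _ _ _ _ _ _ h3, quad_div_deriv _ _ _ _ _ _ h4]
  rw [show (0:ℝ) + (v2 + v3 + v3 * w2) * w3 = (v2 + v3 + v3 * w2) * w3 by ring,
    show (v2 + v3) * w3 + (v3 * w3) * w2 = (v2 + v3 + v3 * w2) * w3 by ring,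
    show v2 * w3 + ((1 + w2) * w3) * v3 = (v2 + v3 + v3 * w2) * w3 by ring,
    show (v3 + v3 * w2) * w3 + w3 * v2 = (v2 + v3 + v3 * w2) * w3 by ring]
  field_simp
  ring
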